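/- arXiv:cs/0412108 — 2 statements merged into one kernel-verified Lean document; each statement's English description precedes it below -/
import Mathlib

section
/- (Esposito) For the channel Y = Z + N, the gradient of the logarithm of the likelihood ratio l(y) = p_Y(y)/p_N(y) gives the conditional mean estimate: ∇ log l(y) = E[Z | Y = y] for every y ∈ ℝ^L. -/
open MeasureTheory ProbabilityTheory Real Filter
open scoped ENNReal NNReal Topology

noncomputable section

/-- Density `p_N(y) = (2π)^{-L/2} exp(-‖y‖²/2)` of the `L`-dimensional standard Gaussian. -/
def stdGaussianDensity {L : ℕ} (y : EuclideanSpace ℝ (Fin L)) : ℝ :=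
  (2 * π) ^ (-(L : ℝ) / 2) * Real.exp (-‖y‖ ^ 2 / 2)

/-- Density `p_Y(y) = E[p_N(y − Z)]` of the output `Y = Z + N` of the standard Gaussian
channel with input `Z`. -/
def outDensity {Ω : Type*} [MeasurableSpace Ω] {L : ℕ} (μ : Measure Ω)
    (Z : Ω → EuclideanSpace ℝ (Fin L)) (y : EuclideanSpace ℝ (Fin L)) : ℝ :=
  ∫ ω, stdGaussianDensity (y - Z ω) ∂μ

/-- Likelihood ratio `l(y) = p_Y(y) / p_N(y)`. -/
def likRatio {Ω : Type*} [MeasurableSpace Ω] {L : ℕ} (μ : Measure Ω)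
    (Z : Ω → EuclideanSpace ℝ (Fin L)) (y : EuclideanSpace ℝ (Fin L)) : ℝ :=
  outDensity μ Z y / stdGaussianDensity y

/-- Conditional mean `E[Z | Y = y] = E[Z · p_N(y − Z)] / p_Y(y)` of the input `Z` given the
output value `Y = y` (Bayes formula). -/
def condMeanBayes {Ω : Type*} [MeasurableSpace Ω] {L : ℕ} (μ : Measure Ω)
    (Z : Ω → EuclideanSpace ℝ (Fin L)) (y : EuclideanSpace ℝ (Fin L)) :
    EuclideanSpace ℝ (Fin L) :=
  WithLp.toLp 2 (fun l => (∫ ω, Z ω l * stdGaussianDensity (y - Z ω) ∂μ) / outDensity μ Z y)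

section Aux

variable {L : ℕ}

lemma stdGaussianDensity_pos (y : EuclideanSpace ℝ (Fin L)) : 0 < stdGaussianDensity y :=
  mul_pos (Real.rpow_pos_of_pos (by positivity) _) (Real.exp_pos _)

lemma stdGaussianDensity_le (y : EuclideanSpace ℝ (Fin L)) :
    stdGaussianDensity y ≤ (2 * π) ^ (-(L : ℝ) / 2) := by
  rw [stdGaussianDensity]
  have h1 : Real.exp (-‖y‖ ^ 2 / 2) ≤ 1 := by
    rw [Real.exp_le_one_iff]
    nlinarith [sq_nonneg ‖y‖]
  calc (2 * π) ^ (-(L : ℝ) / 2) * Real.exp (-‖y‖ ^ 2 / 2)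
      ≤ (2 * π) ^ (-(L : ℝ) / 2) * 1 := by
        gcongr
    _ = _ := mul_one _

lemma norm_mul_stdGaussianDensity_le (u : EuclideanSpace ℝ (Fin L)) :
    ‖u‖ * stdGaussianDensity u ≤ (2 * π) ^ (-(L : ℝ) / 2) := by
  rw [stdGaussianDensity]
  have h2 : ‖u‖ ≤ Real.exp (‖u‖ ^ 2 / 2) := by
    have := Real.add_one_le_exp (‖u‖ ^ 2 / 2)
    nlinarith [norm_nonneg u]
  have h4 : Real.exp (-‖u‖ ^ 2 / 2) * Real.exp (‖u‖ ^ 2 / 2) = 1 := by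
    rw [← Real.exp_add]; ring_nf; exact Real.exp_zero
  have h1 : ‖u‖ * Real.exp (-‖u‖ ^ 2 / 2) ≤ 1 := by
    nlinarith [Real.exp_pos (-‖u‖ ^ 2 / 2), Real.exp_pos (‖u‖ ^ 2 / 2), norm_nonneg u]
  calc ‖u‖ * ((2 * π) ^ (-(L : ℝ) / 2) * Real.exp (-‖u‖ ^ 2 / 2))
      = (2 * π) ^ (-(L : ℝ) / 2) * (‖u‖ * Real.exp (-‖u‖ ^ 2 / 2)) := by ring
    _ ≤ (2 * π) ^ (-(L : ℝ) / 2) * 1 := by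
        gcongr
    _ = _ := mul_one _

lemma stdGaussianDensity_continuous : Continuous (stdGaussianDensity (L := L)) :=
  continuous_const.mul (Real.continuous_exp.comp
    (((continuous_norm.pow 2).neg).div_const 2))

lemma hasFDerivAt_stdGaussianDensity (u : EuclideanSpace ℝ (Fin L)) :
    HasFDerivAt stdGaussianDensity ((-(stdGaussianDensity u)) • innerSL ℝ u) u := by
  have h1 : HasFDerivAt (fun y : EuclideanSpace ℝ (Fin L) => ‖y‖ ^ 2)
      (2 • innerSL ℝ u) u := (hasStrictFDerivAt_norm_sq u).hasFDerivAt
  have h2 : HasFDerivAt (fun y : EuclideanSpace ℝ (Fin L) => -‖y‖ ^ 2 / 2)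
      ((-(1 : ℝ) / 2) • (2 • innerSL ℝ u)) u := by
    have := h1.const_mul (-(1 : ℝ) / 2)
    convert this using 2 with y
    case e'_11 => ring
    all_goals rfl
  have h3 := (h2.exp).const_mul ((2 * π) ^ (-(L : ℝ) / 2))
  convert h3 using 1
  case e'_12 =>
    ext v
    simp only [stdGaussianDensity, ContinuousLinearMap.smul_apply, smul_eq_mul,
      ContinuousLinearMap.coe_smul']
    ring
  all_goals rfl

lemma hasFDerivAt_stdGaussianDensity_sub (z x : EuclideanSpace ℝ (Fin L)) :
    HasFDerivAt (fun y' => stdGaussianDensity (y' - z))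
      ((-(stdGaussianDensity (x - z))) • innerSL ℝ (x - z)) x := by
  have hsub : HasFDerivAt (fun y' : EuclideanSpace ℝ (Fin L) => y' - z)
      (ContinuousLinearMap.id ℝ _) x := (hasFDerivAt_id x).sub_const z
  have := (hasFDerivAt_stdGaussianDensity (x - z)).comp x hsub
  rw [ContinuousLinearMap.comp_id] at this
  exact this

lemma euclidean_coord_abs_le (a : EuclideanSpace ℝ (Fin L)) (l : Fin L) : |a l| ≤ ‖a‖ := by
  rw [← Real.sqrt_sq_eq_abs, EuclideanSpace.norm_eq]
  apply Real.sqrt_le_sqrt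
  have h : ‖a l‖ ^ 2 ≤ ∑ i, ‖a i‖ ^ 2 :=
    Finset.single_le_sum (f := fun i => ‖a i‖ ^ 2) (fun i _ => sq_nonneg _) (Finset.mem_univ l)
  simpa [Real.norm_eq_abs, sq_abs] using h

end Aux

set_option maxHeartbeats 1000000
set_option synthInstance.maxHeartbeats 400000

/-- **Esposito's lemma** (Lemma 2): for the channel `Y = Z + N`, the gradient of the
log-likelihood ratio gives the conditional mean estimate: `∇ log l(y) = E[Z | Y = y]`. -/
theorem hasGradientAt_log_likRatio
    {Ω : Type*} [MeasurableSpace Ω] (μ : Measure Ω) [IsProbabilityMeasure μ]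
    {L : ℕ} (Z : Ω → EuclideanSpace ℝ (Fin L)) (hZ : Measurable Z)
    (hZ2 : Integrable (fun ω => ‖Z ω‖ ^ 2) μ) :
    ∀ y : EuclideanSpace ℝ (Fin L),
      HasGradientAt (fun y' => Real.log (likRatio μ Z y')) (condMeanBayes μ Z y) y := by
  intro y
  set c : ℝ := (2 * π) ^ (-(L : ℝ) / 2) with hc
  -- integrability of the Gaussian kernel
  have hint : ∀ x : EuclideanSpace ℝ (Fin L),
      Integrable (fun ω => stdGaussianDensity (x - Z ω)) μ := by
    intro x
    refine (integrable_const c).mono' ?_ ?_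
    · exact (stdGaussianDensity_continuous.stronglyMeasurable.comp_measurable
        (measurable_const.sub hZ)).aestronglyMeasurable
    · filter_upwards with ω
      rw [Real.norm_eq_abs, abs_of_pos (stdGaussianDensity_pos _)]
      exact stdGaussianDensity_le _
  -- positivity of the output density
  have hpos : ∀ x, 0 < outDensity μ Z x := by
    intro x
    rw [outDensity, integral_pos_iff_support_of_nonneg_ae
      (Filter.Eventually.of_forall fun ω => (stdGaussianDensity_pos _).le) (hint x)]
    have hsupp : (Function.support fun ω => stdGaussianDensity (x - Z ω)) = Set.univ := by
      ext ω
      simp [Function.mem_support, (stdGaussianDensity_pos (x - Z ω)).ne']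
    rw [hsupp]
    simp
  -- integrability of the vector-valued integrand
  have hvec : Integrable (fun ω => (-(stdGaussianDensity (y - Z ω))) • (y - Z ω)) μ := by
    refine (integrable_const c).mono' ?_ ?_
    · have hcont : Continuous (fun v : EuclideanSpace ℝ (Fin L) =>
          (-(stdGaussianDensity v)) • v) := (stdGaussianDensity_continuous.neg).smul continuous_id
      exact (hcont.stronglyMeasurable.comp_measurable (measurable_const.sub hZ)).aestronglyMeasurable
    · filter_upwards with ω
      rw [norm_smul, Real.norm_eq_abs, abs_neg, abs_of_pos (stdGaussianDensity_pos _)]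
      exact (le_of_eq (mul_comm _ _)).trans (norm_mul_stdGaussianDensity_le _)
  -- integrability of the CLM-valued integrand
  have hF'int : Integrable
      (fun ω => (-(stdGaussianDensity (y - Z ω))) • innerSL ℝ (y - Z ω)) μ := by
    refine (integrable_const c).mono' ?_ ?_
    · have hcont : Continuous (fun v : EuclideanSpace ℝ (Fin L) =>
          (-(stdGaussianDensity v)) • innerSL ℝ v) :=
        (stdGaussianDensity_continuous.neg).smul (innerSL ℝ).continuous
      exact (hcont.stronglyMeasurable.comp_measurable (measurable_const.sub hZ)).aestronglyMeasurable
    · filter_upwards with ω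
      refine le_trans (ContinuousLinearMap.opNorm_smul_le _ _) ?_
      rw [Real.norm_eq_abs, abs_neg, abs_of_pos (stdGaussianDensity_pos _), innerSL_apply_norm]
      exact (le_of_eq (mul_comm _ _)).trans (norm_mul_stdGaussianDensity_le _)
  -- differentiation under the integral sign
  have hDout : HasFDerivAt (fun x => ∫ ω, stdGaussianDensity (x - Z ω) ∂μ)
      (∫ ω, (-(stdGaussianDensity (y - Z ω))) • innerSL ℝ (y - Z ω) ∂μ) y := by
    refine hasFDerivAt_integral_of_dominated_of_fderiv_le
      (F' := fun x ω => (-(stdGaussianDensity (x - Z ω))) • innerSL ℝ (x - Z ω))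
      (bound := fun _ => c) Filter.univ_mem
      (Filter.Eventually.of_forall fun x => (hint x).aestronglyMeasurable)
      (hint y) hF'int.aestronglyMeasurable ?_ (integrable_const c) ?_
    · filter_upwards with ω x hx
      refine le_trans (ContinuousLinearMap.opNorm_smul_le _ _) ?_
      rw [Real.norm_eq_abs, abs_neg, abs_of_pos (stdGaussianDensity_pos _), innerSL_apply_norm]
      exact (le_of_eq (mul_comm _ _)).trans (norm_mul_stdGaussianDensity_le _)
    · filter_upwards with ω x hx
      exact hasFDerivAt_stdGaussianDensity_sub (Z ω) x
  set G : EuclideanSpace ℝ (Fin L) :=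
    ∫ ω, (-(stdGaussianDensity (y - Z ω))) • (y - Z ω) ∂μ with hG
  -- the CLM-valued integral is inner product with G
  have key : (∫ ω, (-(stdGaussianDensity (y - Z ω))) • innerSL ℝ (y - Z ω) ∂μ)
      = innerSL ℝ G := by
    ext v
    rw [ContinuousLinearMap.integral_apply hF'int]
    have h2 : ∀ ω, ((-(stdGaussianDensity (y - Z ω))) • innerSL ℝ (y - Z ω)) v
        = inner ℝ v ((-(stdGaussianDensity (y - Z ω))) • (y - Z ω)) := by
      intro ω
      simp only [ContinuousLinearMap.smul_apply, innerSL_apply_apply, smul_eq_mul,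
        real_inner_smul_right]
      rw [real_inner_comm]
    simp only [h2]
    rw [integral_inner hvec v, innerSL_apply_apply, real_inner_comm]
  rw [key] at hDout
  have hDout2 : HasFDerivAt (outDensity μ Z) (innerSL ℝ G) y := hDout
  -- log derivatives
  have hlg : HasFDerivAt (fun y' => Real.log (stdGaussianDensity y')) (innerSL ℝ (-y)) y := by
    have h := (hasFDerivAt_stdGaussianDensity y).log (stdGaussianDensity_pos y).ne'
    convert h using 1
    case e'_12 =>
      ext v
      simp only [innerSL_apply_apply, ContinuousLinearMap.coe_smul', Pi.smul_apply,
        ContinuousLinearMap.smul_apply, smul_eq_mul, inner_neg_left]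
      field_simp [(stdGaussianDensity_pos y).ne']
    all_goals rfl
  have hlo : HasFDerivAt (fun y' => Real.log (outDensity μ Z y'))
      (innerSL ℝ ((outDensity μ Z y)⁻¹ • G)) y := by
    have h := hDout2.log (hpos y).ne'
    convert h using 1
    case e'_12 =>
      ext v
      simp only [innerSL_apply_apply, ContinuousLinearMap.coe_smul', Pi.smul_apply,
        ContinuousLinearMap.smul_apply, smul_eq_mul, real_inner_smul_left]
    all_goals rfl
  have hsub := hlo.sub hlg
  -- coordinates of G
  have hA : ∀ l, Integrable (fun ω => Z ω l * stdGaussianDensity (y - Z ω)) μ := by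
    intro l
    refine (integrable_const (c * ‖y‖ + c)).mono' ?_ ?_
    · exact ((EuclideanSpace.proj (𝕜 := ℝ) l).continuous.measurable.comp hZ).aestronglyMeasurable.mul
        (stdGaussianDensity_continuous.stronglyMeasurable.comp_measurable
          (measurable_const.sub hZ)).aestronglyMeasurable
    · filter_upwards with ω
      have h1 : |Z ω l| ≤ ‖Z ω‖ := euclidean_coord_abs_le _ l
      have h2 : ‖Z ω‖ ≤ ‖y‖ + ‖y - Z ω‖ := by
        calc ‖Z ω‖ = ‖y - (y - Z ω)‖ := by rw [sub_sub_cancel]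
          _ ≤ ‖y‖ + ‖y - Z ω‖ := norm_sub_le _ _
      have h3 := stdGaussianDensity_le (y - Z ω)
      have h4 := norm_mul_stdGaussianDensity_le (y - Z ω)
      have h5 := (stdGaussianDensity_pos (y - Z ω)).le
      rw [Real.norm_eq_abs, abs_mul, abs_of_pos (stdGaussianDensity_pos _)]
      calc |Z ω l| * stdGaussianDensity (y - Z ω)
          ≤ (‖y‖ + ‖y - Z ω‖) * stdGaussianDensity (y - Z ω) :=
            mul_le_mul_of_nonneg_right (h1.trans h2) h5
        _ = ‖y‖ * stdGaussianDensity (y - Z ω)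
            + ‖y - Z ω‖ * stdGaussianDensity (y - Z ω) := by ring
        _ ≤ ‖y‖ * c + c := add_le_add (mul_le_mul_of_nonneg_left h3 (norm_nonneg y)) h4
        _ = c * ‖y‖ + c := by ring
  have hGcoord : ∀ l, G l = (∫ ω, Z ω l * stdGaussianDensity (y - Z ω) ∂μ)
      - outDensity μ Z y * y l := by
    intro l
    have h := ContinuousLinearMap.integral_comp_comm (EuclideanSpace.proj (𝕜 := ℝ) l) hvec
    have h2 : (∫ ω, (EuclideanSpace.proj (𝕜 := ℝ) l)
          ((-(stdGaussianDensity (y - Z ω))) • (y - Z ω)) ∂μ)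
        = ∫ ω, (Z ω l * stdGaussianDensity (y - Z ω)
            - stdGaussianDensity (y - Z ω) * y l) ∂μ := by
      congr 1
      funext ω
      simp only [PiLp.proj_apply, PiLp.smul_apply, PiLp.sub_apply, smul_eq_mul]
      ring
    have h3 : (EuclideanSpace.proj (𝕜 := ℝ) l) G = G l := rfl
    rw [h3, h2] at h
    rw [← h, integral_sub (hA l) ((hint y).mul_const (y l)), integral_mul_const]
    rfl
  -- the vector identity
  have hvecid : condMeanBayes μ Z y = (outDensity μ Z y)⁻¹ • G + y := by
    ext l
    show (∫ ω, Z ω l * stdGaussianDensity (y - Z ω) ∂μ) / outDensity μ Z y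
        = ((outDensity μ Z y)⁻¹ • G + y) l
    rw [PiLp.add_apply, PiLp.smul_apply, hGcoord l, smul_eq_mul]
    field_simp [(hpos y).ne']
    ring
  -- assemble
  have hEq : (fun y' => Real.log (likRatio μ Z y')) =
      fun y' => Real.log (outDensity μ Z y') - Real.log (stdGaussianDensity y') := by
    funext y'
    rw [likRatio, Real.log_div (hpos y').ne' (stdGaussianDensity_pos y').ne']
  rw [hEq, hvecid]
  refine hasGradientAt_iff_hasFDerivAt.mpr ?_
  convert hsub using 1
  case e'_12 =>
    ext v
    simp only [InnerProductSpace.toDual_apply_apply, ContinuousLinearMap.sub_apply, innerSL_apply_apply,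
      inner_add_left, real_inner_smul_left, inner_neg_left]
    ring
  all_goals rfl
end
end

section
/- For the channel Y = Z + N, the conditional second moment of the input is given by the normalized Laplacian of the likelihood ratio: E[‖Z‖^2 | Y = y] = (∇² l(y)) / l(y) for every y ∈ ℝ^L. -/
set_option synthInstance.maxHeartbeats 1000000
set_option maxHeartbeats 1000000
set_option linter.unusedSectionVars false


open MeasureTheory ProbabilityTheory Real Filter
open scoped ENNReal NNReal Topology

noncomputable section

/-- The Laplacian `∇²f(y) = Σ_l ∂²f/∂y_l²` of a function on `ℝ^L`. -/
def laplacian {L : ℕ} (f : EuclideanSpace ℝ (Fin L) → ℝ) (y : EuclideanSpace ℝ (Fin L)) : ℝ :=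
  ∑ l, fderiv ℝ (fun z => fderiv ℝ f z (EuclideanSpace.single l 1)) y
    (EuclideanSpace.single l 1)

namespace L4

variable {L : ℕ}

def gker {L : ℕ} (y z : EuclideanSpace ℝ (Fin L)) : ℝ :=
  Real.exp ((inner ℝ z y : ℝ) - ‖z‖ ^ 2 / 2)

lemma gker_pos (y z : EuclideanSpace ℝ (Fin L)) : 0 < gker y z := Real.exp_pos _

lemma stdGaussianDensity_pos (y : EuclideanSpace ℝ (Fin L)) : 0 < stdGaussianDensity y :=
  mul_pos (Real.rpow_pos_of_pos (by positivity) _) (Real.exp_pos _)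

lemma factor (y z : EuclideanSpace ℝ (Fin L)) :
    stdGaussianDensity (y - z) = stdGaussianDensity y * gker y z := by
  unfold stdGaussianDensity gker
  rw [mul_assoc, ← Real.exp_add]
  congr 2
  rw [norm_sub_sq_real, real_inner_comm]
  ring

lemma hasFDerivAt_gker (z y : EuclideanSpace ℝ (Fin L)) :
    HasFDerivAt (fun y => gker y z) (gker y z • innerSL ℝ z) y := by
  have h : HasFDerivAt (fun y : EuclideanSpace ℝ (Fin L) => (inner ℝ z y : ℝ) - ‖z‖ ^ 2 / 2)
      (innerSL ℝ z) y := ((innerSL ℝ z).hasFDerivAt).sub_const _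
  exact h.exp

lemma gker_le {y z : EuclideanSpace ℝ (Fin L)} {R : ℝ} (hy : ‖y‖ ≤ R) :
    gker y z ≤ Real.exp (R ^ 2 / 2) := by
  apply Real.exp_le_exp.2
  have h1 : (inner ℝ z y : ℝ) ≤ ‖z‖ * R :=
    (real_inner_le_norm z y).trans (mul_le_mul_of_nonneg_left hy (norm_nonneg _))
  nlinarith [sq_nonneg (R - ‖z‖)]

lemma norm_mul_gker_le {y z : EuclideanSpace ℝ (Fin L)} {R : ℝ} (hy : ‖y‖ ≤ R) :
    ‖z‖ * gker y z ≤ Real.exp ((R + 1) ^ 2 / 2) := by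
  have h0 : ‖z‖ ≤ Real.exp ‖z‖ := by linarith [Real.add_one_le_exp ‖z‖]
  have h1 : (inner ℝ z y : ℝ) ≤ ‖z‖ * R :=
    (real_inner_le_norm z y).trans (mul_le_mul_of_nonneg_left hy (norm_nonneg _))
  calc ‖z‖ * gker y z ≤ Real.exp ‖z‖ * gker y z :=
        mul_le_mul_of_nonneg_right h0 (gker_pos y z).le
    _ = Real.exp (‖z‖ + ((inner ℝ z y : ℝ) - ‖z‖ ^ 2 / 2)) := by rw [Real.exp_add]; rfl
    _ ≤ Real.exp ((R + 1) ^ 2 / 2) := by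
        apply Real.exp_le_exp.2; nlinarith [sq_nonneg (R + 1 - ‖z‖)]

lemma sq_mul_gker_le {y z : EuclideanSpace ℝ (Fin L)} {R : ℝ} (hy : ‖y‖ ≤ R) :
    ‖z‖ ^ 2 * gker y z ≤ Real.exp ((R + 2) ^ 2 / 2) := by
  have h0 : ‖z‖ ≤ Real.exp ‖z‖ := by linarith [Real.add_one_le_exp ‖z‖]
  have h0' : ‖z‖ ^ 2 ≤ Real.exp (2 * ‖z‖) := by
    have := pow_le_pow_left₀ (norm_nonneg z) h0 2
    rwa [← Real.exp_nat_mul, Nat.cast_ofNat] at this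
  have h1 : (inner ℝ z y : ℝ) ≤ ‖z‖ * R :=
    (real_inner_le_norm z y).trans (mul_le_mul_of_nonneg_left hy (norm_nonneg _))
  calc ‖z‖ ^ 2 * gker y z ≤ Real.exp (2 * ‖z‖) * gker y z :=
        mul_le_mul_of_nonneg_right h0' (gker_pos y z).le
    _ = Real.exp (2 * ‖z‖ + ((inner ℝ z y : ℝ) - ‖z‖ ^ 2 / 2)) := by rw [Real.exp_add]; rfl
    _ ≤ Real.exp ((R + 2) ^ 2 / 2) := by
        apply Real.exp_le_exp.2; nlinarith [sq_nonneg (R + 2 - ‖z‖)]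

lemma continuous_gker (y : EuclideanSpace ℝ (Fin L)) :
    Continuous fun z : EuclideanSpace ℝ (Fin L) => gker y z := by
  apply Real.continuous_exp.comp
  exact ((continuous_id.inner continuous_const).sub ((continuous_norm.pow 2).div_const 2))

end L4

namespace L4

variable {Ω : Type*} [MeasurableSpace Ω] {μ : Measure Ω} [IsProbabilityMeasure μ]
  {L : ℕ} {Z : Ω → EuclideanSpace ℝ (Fin L)}

lemma integrable_of_bound {X : Type*} [NormedAddCommGroup X] {f : Ω → X}
    (hf : AEStronglyMeasurable f μ) (C : ℝ) (h : ∀ ω, ‖f ω‖ ≤ C) : Integrable f μ :=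
  Integrable.mono' (integrable_const C) hf (ae_of_all _ h)

lemma aesm_gker (hZ : Measurable Z) (y : EuclideanSpace ℝ (Fin L)) :
    AEStronglyMeasurable (fun ω => gker y (Z ω)) μ :=
  (continuous_gker y).comp_aestronglyMeasurable hZ.aestronglyMeasurable

lemma aesm_gker_smul (hZ : Measurable Z) (y : EuclideanSpace ℝ (Fin L)) :
    AEStronglyMeasurable (fun ω => gker y (Z ω) • innerSL ℝ (Z ω)) μ := by
  have hc : Continuous fun z : EuclideanSpace ℝ (Fin L) => gker y z • innerSL ℝ z :=
    (continuous_gker y).smul (innerSL ℝ).continuous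
  exact hc.comp_aestronglyMeasurable hZ.aestronglyMeasurable

lemma norm_gker_smul (y z : EuclideanSpace ℝ (Fin L)) :
    ‖gker y z • innerSL ℝ z‖ = gker y z * ‖z‖ := by
  rw [norm_smul (gker y z) (innerSL ℝ z), Real.norm_eq_abs, abs_of_pos (gker_pos y z), innerSL_apply_norm]

lemma integrable_gker (hZ : Measurable Z) (y : EuclideanSpace ℝ (Fin L)) :
    Integrable (fun ω => gker y (Z ω)) μ := by
  refine integrable_of_bound (aesm_gker hZ y) (Real.exp (‖y‖ ^ 2 / 2)) fun ω => ?_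
  rw [Real.norm_eq_abs, abs_of_pos (gker_pos _ _)]
  exact gker_le le_rfl

lemma integrable_gker_smul (hZ : Measurable Z) (y : EuclideanSpace ℝ (Fin L)) :
    Integrable (fun ω => gker y (Z ω) • innerSL ℝ (Z ω)) μ := by
  refine integrable_of_bound (aesm_gker_smul hZ y) (Real.exp ((‖y‖ + 1) ^ 2 / 2)) fun ω => ?_
  rw [norm_gker_smul, mul_comm]
  exact norm_mul_gker_le le_rfl

lemma hasFDerivAt_F (hZ : Measurable Z) (y₀ : EuclideanSpace ℝ (Fin L)) :
    HasFDerivAt (fun y => ∫ ω, gker y (Z ω) ∂μ)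
      (∫ ω, gker y₀ (Z ω) • innerSL ℝ (Z ω) ∂μ) y₀ := by
  apply hasFDerivAt_integral_of_dominated_of_fderiv_le
    (F' := fun y ω => gker y (Z ω) • innerSL ℝ (Z ω))
    (bound := fun _ => Real.exp ((‖y₀‖ + 2) ^ 2 / 2)) (Metric.ball_mem_nhds y₀ one_pos)
  · filter_upwards with y using aesm_gker hZ y
  · exact integrable_gker hZ y₀
  · exact aesm_gker_smul hZ y₀
  · filter_upwards with ω y hy
    rw [norm_gker_smul, mul_comm]
    have hyR : ‖y‖ ≤ ‖y₀‖ + 1 := by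
      have h1 := mem_ball_iff_norm.1 hy
      have h2 := norm_add_le y₀ (y - y₀)
      simp only [add_sub_cancel] at h2
      linarith
    have h3 := norm_mul_gker_le (z := Z ω) hyR
    have h4 : (‖y₀‖ + 1 + 1 : ℝ) = ‖y₀‖ + 2 := by ring
    rwa [h4] at h3
  · exact integrable_const _
  · filter_upwards with ω y _ using hasFDerivAt_gker (Z ω) y

lemma fderiv_F_apply (hZ : Measurable Z) (y v : EuclideanSpace ℝ (Fin L)) :
    fderiv ℝ (fun y => ∫ ω, gker y (Z ω) ∂μ) y v
      = ∫ ω, gker y (Z ω) * (inner ℝ (Z ω) v : ℝ) ∂μ := by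
  rw [(hasFDerivAt_F hZ y).fderiv,
    ContinuousLinearMap.integral_apply (integrable_gker_smul hZ y) v]
  refine integral_congr_ae (ae_of_all _ fun ω => ?_)
  simp [smul_eq_mul]

lemma aesm_gker_mul (hZ : Measurable Z) (y v : EuclideanSpace ℝ (Fin L)) :
    AEStronglyMeasurable (fun ω => gker y (Z ω) * (inner ℝ (Z ω) v : ℝ)) μ := by
  have hc : Continuous fun z : EuclideanSpace ℝ (Fin L) => gker y z * (inner ℝ z v : ℝ) :=
    (continuous_gker y).mul (continuous_id.inner continuous_const)
  exact hc.comp_aestronglyMeasurable hZ.aestronglyMeasurable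

lemma aesm_gker_smul2 (hZ : Measurable Z) (y v : EuclideanSpace ℝ (Fin L)) :
    AEStronglyMeasurable
      (fun ω => (inner ℝ (Z ω) v : ℝ) • (gker y (Z ω) • innerSL ℝ (Z ω))) μ := by
  have hc : Continuous fun z : EuclideanSpace ℝ (Fin L) =>
      (inner ℝ z v : ℝ) • (gker y z • innerSL ℝ z) :=
    Continuous.smul (f := fun z : EuclideanSpace ℝ (Fin L) => (inner ℝ z v : ℝ)) (continuous_id.inner continuous_const) ((continuous_gker y).smul (innerSL ℝ).continuous)
  exact hc.comp_aestronglyMeasurable hZ.aestronglyMeasurable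

lemma norm_gker_smul2 {v : EuclideanSpace ℝ (Fin L)} (hv : ‖v‖ ≤ 1)
    (y z : EuclideanSpace ℝ (Fin L)) :
    ‖(inner ℝ z v : ℝ) • (gker y z • innerSL ℝ z)‖ ≤ ‖z‖ ^ 2 * gker y z := by
  rw [norm_smul ((inner ℝ z v : ℝ)) (gker y z • innerSL ℝ z), norm_gker_smul]
  have h1 : ‖(inner ℝ z v : ℝ)‖ ≤ ‖z‖ := by
    rw [Real.norm_eq_abs]
    calc |(inner ℝ z v : ℝ)| ≤ ‖z‖ * ‖v‖ := abs_real_inner_le_norm z v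
      _ ≤ ‖z‖ * 1 := mul_le_mul_of_nonneg_left hv (norm_nonneg _)
      _ = ‖z‖ := mul_one _
  calc ‖(inner ℝ z v : ℝ)‖ * (gker y z * ‖z‖) ≤ ‖z‖ * (gker y z * ‖z‖) :=
      mul_le_mul_of_nonneg_right h1 (mul_nonneg (gker_pos y z).le (norm_nonneg z))
    _ = ‖z‖ ^ 2 * gker y z := by ring

lemma integrable_gker_smul2 (hZ : Measurable Z) {v : EuclideanSpace ℝ (Fin L)} (hv : ‖v‖ ≤ 1)
    (y : EuclideanSpace ℝ (Fin L)) :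
    Integrable (fun ω => (inner ℝ (Z ω) v : ℝ) • (gker y (Z ω) • innerSL ℝ (Z ω))) μ := by
  refine integrable_of_bound (aesm_gker_smul2 hZ y v) (Real.exp ((‖y‖ + 2) ^ 2 / 2)) fun ω => ?_
  exact (norm_gker_smul2 hv y (Z ω)).trans (sq_mul_gker_le le_rfl)

lemma hasFDerivAt_G (hZ : Measurable Z) {v : EuclideanSpace ℝ (Fin L)} (hv : ‖v‖ ≤ 1)
    (y₀ : EuclideanSpace ℝ (Fin L)) :
    HasFDerivAt (fun y => ∫ ω, gker y (Z ω) * (inner ℝ (Z ω) v : ℝ) ∂μ)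
      (∫ ω, (inner ℝ (Z ω) v : ℝ) • (gker y₀ (Z ω) • innerSL ℝ (Z ω)) ∂μ) y₀ := by
  apply hasFDerivAt_integral_of_dominated_of_fderiv_le
    (F' := fun y ω => (inner ℝ (Z ω) v : ℝ) • (gker y (Z ω) • innerSL ℝ (Z ω)))
    (bound := fun _ => Real.exp ((‖y₀‖ + 3) ^ 2 / 2)) (Metric.ball_mem_nhds y₀ one_pos)
  · filter_upwards with y using aesm_gker_mul hZ y v
  · refine integrable_of_bound (aesm_gker_mul hZ y₀ v) (Real.exp ((‖y₀‖ + 1) ^ 2 / 2)) fun ω => ?_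
    rw [Real.norm_eq_abs, abs_mul, abs_of_pos (gker_pos _ _)]
    have h1 : |(inner ℝ (Z ω) v : ℝ)| ≤ ‖Z ω‖ := by
      calc |(inner ℝ (Z ω) v : ℝ)| ≤ ‖Z ω‖ * ‖v‖ := abs_real_inner_le_norm _ _
        _ ≤ ‖Z ω‖ * 1 := mul_le_mul_of_nonneg_left hv (norm_nonneg _)
        _ = ‖Z ω‖ := mul_one _
    calc gker y₀ (Z ω) * |(inner ℝ (Z ω) v : ℝ)| ≤ gker y₀ (Z ω) * ‖Z ω‖ :=
        mul_le_mul_of_nonneg_left h1 (gker_pos _ _).le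
      _ = ‖Z ω‖ * gker y₀ (Z ω) := mul_comm _ _
      _ ≤ Real.exp ((‖y₀‖ + 1) ^ 2 / 2) := norm_mul_gker_le le_rfl
  · exact aesm_gker_smul2 hZ y₀ v
  · filter_upwards with ω y hy
    have hyR : ‖y‖ ≤ ‖y₀‖ + 1 := by
      have h1 := mem_ball_iff_norm.1 hy
      have h2 := norm_add_le y₀ (y - y₀)
      simp only [add_sub_cancel] at h2
      linarith
    refine (norm_gker_smul2 hv y (Z ω)).trans ?_
    have h3 := sq_mul_gker_le (z := Z ω) hyR
    have h4 : (‖y₀‖ + 1 + 2 : ℝ) = ‖y₀‖ + 3 := by ring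
    rwa [h4] at h3
  · exact integrable_const _
  · filter_upwards with ω y _ using (hasFDerivAt_gker (Z ω) y).mul_const _

lemma fderiv_G_apply (hZ : Measurable Z) {v : EuclideanSpace ℝ (Fin L)} (hv : ‖v‖ ≤ 1)
    (y : EuclideanSpace ℝ (Fin L)) :
    fderiv ℝ (fun y => ∫ ω, gker y (Z ω) * (inner ℝ (Z ω) v : ℝ) ∂μ) y v
      = ∫ ω, (inner ℝ (Z ω) v : ℝ) ^ 2 * gker y (Z ω) ∂μ := by
  rw [(hasFDerivAt_G hZ hv y).fderiv,
    ContinuousLinearMap.integral_apply (integrable_gker_smul2 hZ hv y) v]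
  refine integral_congr_ae (ae_of_all _ fun ω => ?_)
  simp only [ContinuousLinearMap.smul_apply, innerSL_apply_apply, smul_eq_mul]
  ring

end L4

/-- **Lemma 4**: for the channel `Y = Z + N`, the conditional second moment of the input is
the normalized Laplacian of the likelihood ratio: `E[‖Z‖² | Y = y] = ∇²l(y) / l(y)`. -/
theorem condSecondMoment_eq_laplacian_likRatio_div
    {Ω : Type*} [MeasurableSpace Ω] (μ : Measure Ω) [IsProbabilityMeasure μ]
    {L : ℕ} (Z : Ω → EuclideanSpace ℝ (Fin L)) (hZ : Measurable Z)
    (hZ2 : Integrable (fun ω => ‖Z ω‖ ^ 2) μ) :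
    ∀ y : EuclideanSpace ℝ (Fin L),
      (∫ ω, ‖Z ω‖ ^ 2 * stdGaussianDensity (y - Z ω) ∂μ) / outDensity μ Z y
        = laplacian (likRatio μ Z) y / likRatio μ Z y := by
  intro y
  have hg := L4.stdGaussianDensity_pos y
  have hout : ∀ y' : EuclideanSpace ℝ (Fin L),
      outDensity μ Z y' = stdGaussianDensity y' * ∫ ω, L4.gker y' (Z ω) ∂μ := by
    intro y'
    unfold outDensity
    simp_rw [L4.factor]
    exact integral_const_mul _ _
  have hlikf : likRatio μ Z = fun y' => ∫ ω, L4.gker y' (Z ω) ∂μ := by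
    funext y'
    unfold likRatio
    rw [hout y', mul_comm,
      mul_div_assoc, div_self (ne_of_gt (L4.stdGaussianDensity_pos y')), mul_one]
  have hlap : laplacian (likRatio μ Z) y = ∫ ω, ‖Z ω‖ ^ 2 * L4.gker y (Z ω) ∂μ := by
    unfold laplacian
    rw [hlikf]
    have hstep : ∀ l : Fin L,
        fderiv ℝ (fun z => fderiv ℝ (fun y' => ∫ ω, L4.gker y' (Z ω) ∂μ) z
            (EuclideanSpace.single l 1)) y (EuclideanSpace.single l 1)
          = ∫ ω, (Z ω l) ^ 2 * L4.gker y (Z ω) ∂μ := by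
      intro l
      have hv : ‖(EuclideanSpace.single l (1:ℝ))‖ ≤ 1 := by
        rw [EuclideanSpace.norm_single]; norm_num
      have h1 : (fun z => fderiv ℝ (fun y' => ∫ ω, L4.gker y' (Z ω) ∂μ) z
            (EuclideanSpace.single l 1))
          = fun z => ∫ ω, L4.gker z (Z ω) *
              (inner ℝ (Z ω) (EuclideanSpace.single l (1:ℝ)) : ℝ) ∂μ :=
        funext fun z => L4.fderiv_F_apply hZ z _
      rw [h1, L4.fderiv_G_apply hZ hv y]
      refine integral_congr_ae (ae_of_all _ fun ω => ?_)
      have h2 : (inner ℝ (Z ω) (EuclideanSpace.single l (1:ℝ)) : ℝ) = Z ω l := by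
        rw [EuclideanSpace.inner_single_right]
        simp
      simp only [h2]
    rw [Finset.sum_congr rfl (fun l _ => hstep l), ← integral_finset_sum]
    · refine integral_congr_ae (ae_of_all _ fun ω => ?_)
      show ∑ i, Z ω i ^ 2 * L4.gker y (Z ω) = ‖Z ω‖ ^ 2 * L4.gker y (Z ω)
      rw [← Finset.sum_mul]
      congr 1
      rw [EuclideanSpace.norm_eq,
        Real.sq_sqrt (Finset.sum_nonneg fun i _ => sq_nonneg _)]
      simp [Real.norm_eq_abs, sq_abs]
    · intro l _
      have hc : Continuous fun z : EuclideanSpace ℝ (Fin L) => (z l) ^ 2 * L4.gker y z :=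
        (((EuclideanSpace.proj (𝕜 := ℝ) l).continuous).pow 2).mul (L4.continuous_gker y)
      refine L4.integrable_of_bound (hc.comp_aestronglyMeasurable hZ.aestronglyMeasurable)
        (Real.exp ((‖y‖ + 2) ^ 2 / 2)) fun ω => ?_
      rw [Real.norm_eq_abs, abs_mul, abs_of_pos (L4.gker_pos _ _), abs_pow, sq_abs]
      have h3 : (Z ω l) ^ 2 ≤ ‖Z ω‖ ^ 2 := by
        have h4 : |Z ω l| ≤ ‖Z ω‖ := by
          have := abs_real_inner_le_norm (Z ω) (EuclideanSpace.single l (1:ℝ))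
          rw [EuclideanSpace.inner_single_right, EuclideanSpace.norm_single] at this
          simpa using this
        calc (Z ω l) ^ 2 = |Z ω l| ^ 2 := (sq_abs _).symm
          _ ≤ ‖Z ω‖ ^ 2 := pow_le_pow_left₀ (abs_nonneg _) h4 2
      calc (Z ω l) ^ 2 * L4.gker y (Z ω) ≤ ‖Z ω‖ ^ 2 * L4.gker y (Z ω) :=
          mul_le_mul_of_nonneg_right h3 (L4.gker_pos _ _).le
        _ ≤ Real.exp ((‖y‖ + 2) ^ 2 / 2) := L4.sq_mul_gker_le le_rfl
  have hnum : ∫ ω, ‖Z ω‖ ^ 2 * stdGaussianDensity (y - Z ω) ∂μ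
      = stdGaussianDensity y * ∫ ω, ‖Z ω‖ ^ 2 * L4.gker y (Z ω) ∂μ := by
    rw [← integral_const_mul]
    refine integral_congr_ae (ae_of_all _ fun ω => ?_)
    simp only [L4.factor]
    ring
  have hliky : likRatio μ Z y = ∫ ω, L4.gker y (Z ω) ∂μ := by rw [hlikf]
  rw [hnum, hout y, hlap, hliky, mul_div_mul_left _ _ (ne_of_gt hg)]
end
end
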